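/- Let n ≥ 2, s > 0, 0 < δ ≤ 1, and let f ∈ 𝔹ⁿ_s satisfy |f_k| ≥ δ·|k|₁^{−n}·e^{−|k|₁ s} for every k ∈ 𝒢ⁿ with |k|₁ ≥ N(δ;s,n). Then for every k ∈ 𝒢ⁿ with |k|₁ ≥ N(δ;s,n) there exists θ_k ∈ [0,2π) (with e^{iθ_k} = f_k/|f_k|) such that π_{ℤk}f(θ) = 2|f_k|·(cos(θ+θ_k) + F*_k(θ)), where F*_k(θ) := (1/(2|f_k|))·Σ_{j∈ℤ, |j|≥2} f_{jk} e^{i j θ}; moreover F*_k extends holomorphically to the complex strip {θ ∈ ℂ : |Im θ| < 1} and sup_{|Im θ|<1} |F*_k(θ)| ≤ 2^{−40}. -/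

import Mathlib

open scoped Real

noncomputable section

/-- `|k|₁ := ∑ᵢ |kᵢ|`, as a real number. -/
def norm1 {n : ℕ} (k : Fin n → ℤ) : ℝ := ∑ i, |(k i : ℝ)|

/-- `ℤⁿ_*`: nonzero integer vectors whose first nonzero component is positive. -/
def ZnStar {n : ℕ} (k : Fin n → ℤ) : Prop :=
  k ≠ 0 ∧ ∀ j, (∀ i, i < j → k i = 0) → 0 ≤ k j

/-- `𝒢ⁿ`: generators of one-dimensional maximal lattices, i.e. `k ∈ ℤⁿ_*` with
`gcd (k₁, …, kₙ) = 1`. -/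
def Gen {n : ℕ} (k : Fin n → ℤ) : Prop :=
  ZnStar k ∧ Finset.univ.gcd (fun i => (k i).natAbs) = 1

/-- Membership `f ∈ 𝔹ⁿ_s` for a zero-average real analytic function on `𝕋ⁿ` described by its
Fourier coefficients `c : ℤⁿ → ℂ`:  `‖f‖_s := sup_k |c k| e^{|k|₁ s} ≤ 1`. -/
def InUnitBallAnalytic {n : ℕ} (s : ℝ) (c : (Fin n → ℤ) → ℂ) : Prop :=
  ∀ k, ‖c k‖ * Real.exp (s * norm1 k) ≤ 1

/-- The one-dimensional Fourier projection `π_{ℤk} f (θ) := ∑_{j ∈ ℤ} f_{jk} e^{i j θ}`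
of the function with Fourier coefficients `c`. -/
def piK {n : ℕ} (c : (Fin n → ℤ) → ℂ) (k : Fin n → ℤ) : ℝ → ℝ :=
  fun θ => (∑' j : ℤ, c (j • k) * Complex.exp (Complex.I * (j : ℂ) * (θ : ℂ))).re

/-- The cut-off function `N(δ; s, n) := 2·max{1, (1/s)·log(cₙ/(sⁿδ))}`,
`cₙ := 2⁴⁴·(2n/e)ⁿ`. -/
def cutoffN (n : ℕ) (s δ : ℝ) : ℝ :=
  2 * max 1 ((1 / s) * Real.log ((2 ^ 44 * (2 * n / Real.exp 1) ^ n) / (s ^ n * δ)))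

/-- The tail `F*_k(z) := (1/(2|f_k|))·∑_{|j| ≥ 2} f_{jk} e^{i j z}`, as a function of a complex
variable `z`. -/
def Fstar {n : ℕ} (c : (Fin n → ℤ) → ℂ) (k : Fin n → ℤ) : ℂ → ℂ :=
  fun z => (1 / (2 * (‖c k‖ : ℂ))) *
    ∑' j : ℤ, if 2 ≤ |j| then c (j • k) * Complex.exp (Complex.I * (j : ℂ) * z) else 0

lemma aux_tail_hasSum {r : ℝ} (h0 : 0 ≤ r) (h1 : r < 1) :
    HasSum (fun j : ℤ => if 2 ≤ |j| then r ^ j.natAbs else 0) (2 * (r ^ 2 * (1 - r)⁻¹)) := by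
  classical
  set f : ℕ → ℝ := fun m => if 2 ≤ m then r ^ m else 0 with hf
  have hgeo : HasSum (fun m : ℕ => r ^ 2 * r ^ m) (r ^ 2 * (1 - r)⁻¹) :=
    (hasSum_geometric_of_lt_one h0 h1).mul_left _
  have hfsum : HasSum f (r ^ 2 * (1 - r)⁻¹) := by
    have h2 : HasSum (fun m : ℕ => f (m + 2)) (r ^ 2 * (1 - r)⁻¹) := by
      have : (fun m : ℕ => f (m + 2)) = fun m : ℕ => r ^ 2 * r ^ m := by
        funext m; simp [hf, pow_add, mul_comm]
      rw [this]; exact hgeo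
    have := (hasSum_nat_add_iff (f := f) 2).1 h2
    simpa [hf, Finset.sum_range_succ] using this
  have hfsum1 : HasSum (fun m : ℕ => f (m + 1)) (r ^ 2 * (1 - r)⁻¹) := by
    rw [hasSum_nat_add_iff 1]
    simpa [hf, Finset.sum_range_succ] using hfsum
  have hcond : ∀ m : ℕ, (2 ≤ |(m : ℤ)|) ↔ 2 ≤ m := by
    intro m; rw [Nat.abs_cast]; exact_mod_cast Iff.rfl
  have hnat : HasSum (fun m : ℕ =>
      if 2 ≤ |((m : ℤ))| then r ^ ((m : ℤ)).natAbs else 0) (r ^ 2 * (1 - r)⁻¹) := by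
    have : (fun m : ℕ => if 2 ≤ |((m : ℤ))| then r ^ ((m : ℤ)).natAbs else 0) = f := by
      funext m; simp [hf, hcond m, Int.natAbs_natCast]
    rw [this]; exact hfsum
  have hneg : HasSum (fun m : ℕ =>
      if 2 ≤ |(-((m : ℤ) + 1))| then r ^ (-((m : ℤ) + 1)).natAbs else 0) (r ^ 2 * (1 - r)⁻¹) := by
    have : (fun m : ℕ => if 2 ≤ |(-((m : ℤ) + 1))| then r ^ (-((m : ℤ) + 1)).natAbs else 0)
        = fun m : ℕ => f (m + 1) := by
      funext m
      have h1' : |(-((m : ℤ) + 1))| = ((m : ℤ) + 1) := by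
        rw [abs_neg]; exact abs_of_nonneg (by positivity)
      have h2' : (-((m : ℤ) + 1)).natAbs = m + 1 := by
        rw [Int.natAbs_neg]; exact_mod_cast Int.natAbs_natCast (m+1)
      rw [h1', h2', hf]
      have : ((2:ℤ) ≤ (m:ℤ) + 1) ↔ 2 ≤ m + 1 := by omega
      simp [this]
    rw [this]; exact hfsum1
  have h := HasSum.of_nat_of_neg_add_one (f := fun j : ℤ => if 2 ≤ |j| then r ^ j.natAbs else 0) hnat hneg
  have h2 : (2:ℝ) * (r ^ 2 * (1 - r)⁻¹) = r ^ 2 * (1 - r)⁻¹ + r ^ 2 * (1 - r)⁻¹ := by ring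
  rw [h2]; exact h

lemma aux_norm1_smul {n : ℕ} (j : ℤ) (k : Fin n → ℤ) :
    norm1 (j • k) = |(j : ℝ)| * norm1 k := by
  simp only [norm1, Pi.smul_apply, smul_eq_mul, Int.cast_mul, abs_mul, ← Finset.mul_sum]

set_option maxHeartbeats 1000000 in
/-- If `f ∈ 𝔹ⁿ_s` satisfies `|f_k| ≥ δ |k|₁^{−n} e^{−|k|₁ s}` for all
`k ∈ 𝒢ⁿ` with `|k|₁ ≥ N(δ;s,n)`, then for every such `k` there is `θ_k ∈ [0, 2π)` with
`e^{iθ_k} = f_k/|f_k|` such that `π_{ℤk} f (θ) = 2|f_k|(cos(θ+θ_k) + F*_k(θ))`; moreover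
`F*_k` is real on `ℝ`, extends holomorphically to the strip `|Im z| < 1`, and is bounded there
by `2^{−40}`. -/
theorem cosine_like_projection {n : ℕ} (hn : 2 ≤ n) (s δ : ℝ) (hs : 0 < s)
    (hδ0 : 0 < δ) (hδ1 : δ ≤ 1)
    (c : (Fin n → ℤ) → ℂ) (hc0 : c 0 = 0)
    (hsym : ∀ k, c (-k) = (starRingEnd ℂ) (c k))
    (hball : InUnitBallAnalytic s c)
    (hlow : ∀ k : Fin n → ℤ, Gen k → cutoffN n s δ ≤ norm1 k →
      δ * Real.exp (-(norm1 k) * s) / norm1 k ^ n ≤ ‖c k‖) :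
    ∀ k : Fin n → ℤ, Gen k → cutoffN n s δ ≤ norm1 k →
      ∃ θk ∈ Set.Ico (0 : ℝ) (2 * π),
        Complex.exp (Complex.I * (θk : ℂ)) = c k / (‖c k‖ : ℂ) ∧
        (∀ θ : ℝ, piK c k θ
          = 2 * ‖c k‖ * (Real.cos (θ + θk) + (Fstar c k (θ : ℂ)).re)) ∧
        (∀ θ : ℝ, (Fstar c k (θ : ℂ)).im = 0) ∧
        DifferentiableOn ℂ (Fstar c k) {z : ℂ | |z.im| < 1} ∧
        (∀ z : ℂ, |z.im| < 1 → ‖Fstar c k z‖ ≤ 2 ^ (-(40 : ℤ))) := by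
  intro k hk hkN
  classical
  set K := norm1 k with hKdef
  set A := ‖c k‖ with hAdef
  set X := ((2:ℝ) ^ 44 * (2 * (n:ℝ) / Real.exp 1) ^ n) / (s ^ n * δ) with hXdef
  have hn2R : (2:ℝ) ≤ (n:ℝ) := by exact_mod_cast hn
  have hcut : cutoffN n s δ = 2 * max 1 ((1/s) * Real.log X) := rfl
  have hc2 : (2:ℝ) ≤ cutoffN n s δ := by
    rw [hcut]
    have := le_max_left (1:ℝ) ((1/s) * Real.log X)
    linarith
  have hK2 : (2:ℝ) ≤ K := le_trans hc2 hkN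
  have hK0 : (0:ℝ) < K := by linarith
  set t := s * K with htdef
  have ht0 : (0:ℝ) < t := mul_pos hs hK0
  have hbase1 : (1:ℝ) ≤ 2 * (n:ℝ) / Real.exp 1 := by
    rw [le_div_iff₀ (Real.exp_pos 1)]
    nlinarith [Real.exp_one_lt_d9]
  have hbasepos : (0:ℝ) < 2 * (n:ℝ) / Real.exp 1 := by linarith
  have hP : (0:ℝ) < (2 * (n:ℝ) / Real.exp 1) ^ n := pow_pos hbasepos n
  have hXpos : (0:ℝ) < X := by
    apply div_pos (by positivity) (by positivity)
  have hlogX : Real.log X ≤ t / 2 := by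
    have h1 : (1/s) * Real.log X ≤ K / 2 := by
      have h2 := le_max_right (1:ℝ) ((1/s) * Real.log X)
      rw [hcut] at hkN; linarith
    have := mul_le_mul_of_nonneg_left h1 hs.le
    rw [htdef]
    have hss : s * ((1/s) * Real.log X) = Real.log X := by field_simp
    nlinarith
  have ht2 : (2:ℝ) ≤ t := by
    rcases le_or_gt 1 s with h | h
    · nlinarith
    · have hsn : s ^ n ≤ 1 := pow_le_one₀ hs.le h.le
      have hXge : (3:ℝ) ≤ X := by
        have hone : (1:ℝ) ≤ (2 * (n:ℝ) / Real.exp 1) ^ n := one_le_pow₀ hbase1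
        have hden : s ^ n * δ ≤ 1 := by nlinarith [pow_pos hs n]
        rw [hXdef, le_div_iff₀ (by positivity)]
        nlinarith
      have hlg : (1:ℝ) ≤ Real.log X := by
        rw [Real.le_log_iff_exp_le (by linarith)]
        nlinarith [Real.exp_one_lt_d9]
      have h2 : 2 * ((1/s) * Real.log X) ≤ K := by
        have h3 := le_max_right (1:ℝ) ((1/s) * Real.log X)
        rw [hcut] at hkN; linarith
      have := mul_le_mul_of_nonneg_left h2 hs.le
      have hss : s * (2 * ((1/s) * Real.log X)) = 2 * Real.log X := by field_simp
      rw [hss] at this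
      rw [htdef]; linarith
  have hAlow : δ * Real.exp (-K * s) / K ^ n ≤ A := hlow k hk hkN
  have hApos : (0:ℝ) < A := lt_of_lt_of_le (by positivity) hAlow
  have hckne : c k ≠ 0 := by
    intro h; rw [hAdef, h] at hApos; simp at hApos
  -- coefficient bound
  have hcoef : ∀ m : Fin n → ℤ, ‖c m‖ ≤ Real.exp (-(s * norm1 m)) := by
    intro m
    have h := hball m
    rw [Real.exp_neg, ← one_div, le_div_iff₀ (Real.exp_pos _)]
    exact h
  set r := Real.exp (1 - t) with hrdef
  have hr0 : (0:ℝ) < r := Real.exp_pos _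
  have hr1 : r < 1 := by
    rw [hrdef]; apply Real.exp_lt_one_iff.2; linarith
  have hbnd : ∀ (j : ℤ) (z : ℂ), |z.im| ≤ 1 →
      ‖c (j • k) * Complex.exp (Complex.I * (j:ℂ) * z)‖ ≤ r ^ j.natAbs := by
    intro j z hz
    rw [norm_mul, Complex.norm_exp]
    have hre : (Complex.I * (j:ℂ) * z).re = -((j:ℝ) * z.im) := by
      simp [Complex.mul_re, Complex.mul_im]
    have hnatabs : ((j.natAbs : ℝ)) = |(j:ℝ)| := by
      rw [Nat.cast_natAbs]; push_cast; ring
    have h1 : ‖c (j • k)‖ ≤ Real.exp (-(s * ((j.natAbs:ℝ) * K))) := by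
      have := hcoef (j • k)
      rwa [aux_norm1_smul, ← hnatabs, ← hKdef] at this
    have h2 : Real.exp ((Complex.I * (j:ℂ) * z).re) ≤ Real.exp ((j.natAbs:ℝ)) := by
      rw [hre]; apply Real.exp_le_exp.2
      calc -((j:ℝ) * z.im) ≤ |(j:ℝ) * z.im| := neg_le_abs _
        _ = |(j:ℝ)| * |z.im| := abs_mul _ _
        _ ≤ |(j:ℝ)| * 1 := mul_le_mul_of_nonneg_left hz (abs_nonneg _)
        _ = ((j.natAbs:ℝ)) := by rw [mul_one, hnatabs]
    calc ‖c (j • k)‖ * Real.exp ((Complex.I * (j:ℂ) * z).re)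
        ≤ Real.exp (-(s * ((j.natAbs:ℝ) * K))) * Real.exp ((j.natAbs:ℝ)) :=
          mul_le_mul h1 h2 (Real.exp_pos _).le (Real.exp_pos _).le
      _ = Real.exp ((j.natAbs:ℝ) * (1 - t)) := by
          rw [← Real.exp_add]; congr 1; rw [htdef]; ring
      _ = r ^ j.natAbs := by rw [hrdef, ← Real.exp_nat_mul]
  have hM := aux_tail_hasSum hr0.le hr1
  set M : ℤ → ℝ := fun j => if 2 ≤ |j| then r ^ j.natAbs else 0 with hMdef
  have hMs : Summable M := hM.summable
  have hfull : Summable (fun j : ℤ => r ^ j.natAbs) := by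
    have hd : Summable (fun j : ℤ => if 2 ≤ |j| then (0:ℝ) else r ^ j.natAbs) := by
      apply summable_of_ne_finset_zero (s := ({-1, 0, 1} : Finset ℤ))
      intro j hj
      simp only [Finset.mem_insert, Finset.mem_singleton] at hj
      rw [if_pos]
      rcases lt_or_ge j 0 with h | h
      · rw [abs_of_neg h]; omega
      · rw [abs_of_nonneg h]; omega
    have he : (fun j : ℤ => r ^ j.natAbs)
        = fun j => (if 2 ≤ |j| then r ^ j.natAbs else 0) + (if 2 ≤ |j| then 0 else r ^ j.natAbs) := by
      funext j; split_ifs <;> simp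
    rw [he]; exact hMs.add hd
  -- summability of the terms
  have hsterm : ∀ z : ℂ, |z.im| ≤ 1 →
      Summable (fun j : ℤ => c (j • k) * Complex.exp (Complex.I * (j:ℂ) * z)) := by
    intro z hz
    apply Summable.of_norm
    apply Summable.of_nonneg_of_le (fun j => norm_nonneg _) _ hfull
    intro j
    exact hbnd j z hz
  have hstail : ∀ z : ℂ, |z.im| ≤ 1 →
      Summable (fun j : ℤ => if 2 ≤ |j| then c (j • k) * Complex.exp (Complex.I * (j:ℂ) * z) else 0) := by
    intro z hz
    apply Summable.of_norm
    apply Summable.of_nonneg_of_le (fun j => norm_nonneg _) _ hMs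
    intro j
    show ‖(if 2 ≤ |j| then c (j • k) * Complex.exp (Complex.I * (j:ℂ) * z) else 0 : ℂ)‖
        ≤ (if 2 ≤ |j| then r ^ j.natAbs else 0)
    split_ifs with h
    · exact hbnd j z hz
    · simp
  -- the numeric key inequality
  have hu0 : (0:ℝ) < Real.exp (-(t/2)) := Real.exp_pos _
  have hu : Real.exp (-(t/2)) * Real.exp (t/2) = 1 := by rw [← Real.exp_add]; simp
  have hpn : t ^ n * Real.exp (-(t/2)) ≤ (2 * (n:ℝ) / Real.exp 1) ^ n := by
    have hE : (0:ℝ) < Real.exp (t / (2*n)) := Real.exp_pos _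
    have hb : t * Real.exp (-(t/(2*(n:ℝ)))) ≤ 2 * (n:ℝ) / Real.exp 1 := by
      have h := Real.add_one_le_exp (t/(2*(n:ℝ)) - 1)
      rw [Real.exp_sub] at h
      have h2 : t / (2*(n:ℝ)) ≤ Real.exp (t/(2*(n:ℝ))) / Real.exp 1 := by linarith
      rw [div_le_div_iff₀ (by positivity) (Real.exp_pos 1)] at h2
      rw [Real.exp_neg, ← div_eq_mul_inv, div_le_div_iff₀ hE (Real.exp_pos 1)]
      nlinarith
    have hb' := pow_le_pow_left₀ (by positivity) hb n
    rw [mul_pow, ← Real.exp_nat_mul] at hb'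
    have harg : (n:ℝ) * -(t/(2*(n:ℝ))) = -(t/2) := by
      field_simp
    rw [harg] at hb'
    exact hb'
  have hXle : X ≤ Real.exp (t/2) := by
    rw [← Real.exp_log hXpos]; exact Real.exp_le_exp.2 hlogX
  have hstepA : (2:ℝ)^44 * (2*(n:ℝ)/Real.exp 1)^n ≤ Real.exp (t/2) * (s^n * δ) := by
    rw [hXdef, div_le_iff₀ (by positivity)] at hXle
    linarith
  have huP : Real.exp (-(t/2)) * (2*(n:ℝ)/Real.exp 1)^n ≤ ((2:ℝ)^44)⁻¹ * (s^n * δ) := by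
    have h : (2:ℝ)^44 * (Real.exp (-(t/2)) * (2*(n:ℝ)/Real.exp 1)^n) ≤ s^n * δ := by
      calc (2:ℝ)^44 * (Real.exp (-(t/2)) * (2*(n:ℝ)/Real.exp 1)^n)
          = Real.exp (-(t/2)) * ((2:ℝ)^44 * (2*(n:ℝ)/Real.exp 1)^n) := by ring
        _ ≤ Real.exp (-(t/2)) * (Real.exp (t/2) * (s^n * δ)) :=
            mul_le_mul_of_nonneg_left hstepA hu0.le
        _ = (Real.exp (-(t/2)) * Real.exp (t/2)) * (s^n * δ) := by ring
        _ = s^n * δ := by rw [hu, one_mul]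
    linarith
  have he2 : Real.exp 2 ≤ 8 := by
    have h1 : Real.exp 2 = Real.exp 1 * Real.exp 1 := by
      rw [← Real.exp_add]; norm_num
    nlinarith [Real.exp_one_lt_d9, Real.exp_pos 1]
  have hexp2 : r ^ 2 = Real.exp 2 * Real.exp (-t) * (Real.exp (-(t/2)) * Real.exp (-(t/2))) := by
    rw [hrdef]
    rw [← Real.exp_add, ← Real.exp_add, ← Real.exp_add]
    have : r ^ 2 = Real.exp (1-t) * Real.exp (1-t) := by rw [hrdef]; ring
    rw [show Real.exp (1-t) ^ 2 = Real.exp ((1-t) + (1-t)) by rw [Real.exp_add]; ring]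
    congr 1; ring
  have hmain : 4 * r ^ 2 * t ^ n ≤ ((2:ℝ)^39)⁻¹ * (δ * Real.exp (-t) * s ^ n) := by
    have e1 : 4 * r^2 * t^n = (4 * Real.exp 2) * Real.exp (-t) *
        (Real.exp (-(t/2)) * (t^n * Real.exp (-(t/2)))) := by
      rw [hexp2]; ring
    rw [e1]
    have step1 : Real.exp (-(t/2)) * (t^n * Real.exp (-(t/2)))
        ≤ Real.exp (-(t/2)) * (2*(n:ℝ)/Real.exp 1)^n :=
      mul_le_mul_of_nonneg_left hpn hu0.le
    calc (4 * Real.exp 2) * Real.exp (-t) * (Real.exp (-(t/2)) * (t^n * Real.exp (-(t/2))))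
        ≤ (4 * Real.exp 2) * Real.exp (-t) * (Real.exp (-(t/2)) * (2*(n:ℝ)/Real.exp 1)^n) :=
          mul_le_mul_of_nonneg_left step1 (by positivity)
      _ ≤ (4 * Real.exp 2) * Real.exp (-t) * (((2:ℝ)^44)⁻¹ * (s^n * δ)) :=
          mul_le_mul_of_nonneg_left huP (by positivity)
      _ = (4 * Real.exp 2 * ((2:ℝ)^44)⁻¹) * (Real.exp (-t) * (s^n * δ)) := by ring
      _ ≤ (((2:ℝ)^39)⁻¹) * (Real.exp (-t) * (s^n * δ)) := by
          apply mul_le_mul_of_nonneg_right _ (by positivity)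
          have h39 : ((2:ℝ)^39)⁻¹ = 32 * ((2:ℝ)^44)⁻¹ := by norm_num
          rw [h39]
          have hq : (0:ℝ) < ((2:ℝ)^44)⁻¹ := by positivity
          nlinarith
      _ = ((2:ℝ)^39)⁻¹ * (δ * Real.exp (-t) * s^n) := by ring
  have hKn : K ^ n = t ^ n / s ^ n := by
    rw [htdef, mul_pow]
    field_simp
  have hTn : (0:ℝ) < t ^ n := pow_pos ht0 n
  have h4r : 4 * r ^ 2 ≤ ((2:ℝ)^39)⁻¹ * (δ * Real.exp (-t) / K ^ n) := by
    have hrw : δ * Real.exp (-t) / K ^ n = δ * Real.exp (-t) * s^n / t^n := by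
      rw [hKn]; field_simp
    have hrw2 : ((2:ℝ)^39)⁻¹ * (δ * Real.exp (-t) * s^n / t^n)
        = (((2:ℝ)^39)⁻¹ * (δ * Real.exp (-t) * s^n)) / t^n := by ring
    rw [hrw, hrw2, le_div_iff₀ hTn]
    exact hmain
  have hrhalf : r ≤ 1/2 := by
    have h2e : (2:ℝ) ≤ Real.exp 1 := by nlinarith [Real.add_one_le_exp (1:ℝ)]
    have hle : r ≤ Real.exp (-1) := by
      rw [hrdef]; apply Real.exp_le_exp.2; linarith
    rw [Real.exp_neg] at hle
    have : (Real.exp 1)⁻¹ ≤ 1/2 := by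
      rw [inv_le_comm₀ (Real.exp_pos 1) (by norm_num)]
      linarith
    linarith
  have hinv : (1 - r)⁻¹ ≤ 2 := by
    have h1r : (0:ℝ) < 1 - r := by linarith
    rw [inv_le_comm₀ h1r (by norm_num)]
    linarith
  have hLHS : 2 * (r^2 * (1-r)⁻¹) ≤ 4 * r^2 := by
    have h1 : r^2 * (1-r)⁻¹ ≤ r^2 * 2 :=
      mul_le_mul_of_nonneg_left hinv (by positivity)
    linarith
  have hkey : 2 * (r^2 * (1-r)⁻¹) ≤ ((2:ℝ)^40)⁻¹ * (2 * A) := by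
    have harg : -K * s = -t := by rw [htdef]; ring
    rw [harg] at hAlow
    have h1 : ((2:ℝ)^39)⁻¹ * (δ * Real.exp (-t) / K ^ n) ≤ ((2:ℝ)^39)⁻¹ * A :=
      mul_le_mul_of_nonneg_left hAlow (by positivity)
    have h2 : ((2:ℝ)^39)⁻¹ * A = ((2:ℝ)^40)⁻¹ * (2 * A) := by
      have : ((2:ℝ)^39)⁻¹ = ((2:ℝ)^40)⁻¹ * 2 := by norm_num
      rw [this]; ring
    calc 2 * (r^2 * (1-r)⁻¹) ≤ 4 * r^2 := hLHS
      _ ≤ ((2:ℝ)^39)⁻¹ * (δ * Real.exp (-t) / K ^ n) := h4r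
      _ ≤ ((2:ℝ)^39)⁻¹ * A := h1
      _ = ((2:ℝ)^40)⁻¹ * (2 * A) := h2
  -- θk construction
  have hA0 : (A:ℂ) ≠ 0 := by
    simp only [Ne, Complex.ofReal_eq_zero]; exact ne_of_gt hApos
  have habs_exp : (A:ℂ) * Complex.exp ((Complex.arg (c k) : ℂ) * Complex.I) = c k :=
    Complex.norm_mul_exp_arg_mul_I (c k)
  set φ := Complex.arg (c k) with hφdef
  obtain ⟨hφ1, hφ2⟩ := Complex.arg_mem_Ioc (c k)
  have hπ := Real.pi_pos
  set θk : ℝ := if 0 ≤ φ then φ else φ + 2*π with hθkdef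
  have hmem : θk ∈ Set.Ico (0:ℝ) (2*π) := by
    rw [hθkdef]
    split_ifs with h
    · exact ⟨h, by linarith⟩
    · exact ⟨by linarith, by linarith⟩
  have hexpθk : Complex.exp (Complex.I * (θk:ℂ)) = c k / (A:ℂ) := by
    rw [eq_div_iff hA0, hθkdef]
    split_ifs with h
    · rw [show Complex.I * (φ:ℂ) = (φ:ℂ) * Complex.I by ring, mul_comm]
      exact habs_exp
    · push_cast
      rw [show Complex.I * ((φ:ℂ) + 2*(π:ℂ)) = (φ:ℂ)*Complex.I + 2*(π:ℂ)*Complex.I by ring,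
        Complex.exp_add, Complex.exp_two_pi_mul_I, mul_one, mul_comm]
      exact habs_exp
  have hck_eq : c k = (A:ℂ) * Complex.exp (Complex.I * (θk:ℂ)) := by
    rw [hexpθk]; field_simp
  -- differentiability
  have hUopen : IsOpen {z : ℂ | |z.im| < 1} := by
    have : {z : ℂ | |z.im| < 1} = Complex.im ⁻¹' Set.Ioo (-1) 1 := by
      ext z; simp [abs_lt]
    rw [this]
    exact isOpen_Ioo.preimage Complex.continuous_im
  have hdiff : DifferentiableOn ℂ (Fstar c k) {z : ℂ | |z.im| < 1} := by
    have hsumdiff : DifferentiableOn ℂ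
        (fun z : ℂ => ∑' j : ℤ, if 2 ≤ |j| then c (j • k) * Complex.exp (Complex.I * (j:ℂ) * z) else 0)
        {z : ℂ | |z.im| < 1} := by
      apply Complex.differentiableOn_tsum_of_summable_norm hMs ?_ hUopen ?_
      · intro j
        by_cases h : 2 ≤ |j|
        · simp only [if_pos h]
          apply Differentiable.differentiableOn
          apply Differentiable.const_mul
          apply Differentiable.cexp
          exact differentiable_id.const_mul _
        · simp only [if_neg h]; exact differentiableOn_const 0
      · intro j w hw
        show ‖(if 2 ≤ |j| then c (j • k) * Complex.exp (Complex.I * (j:ℂ) * w) else 0 : ℂ)‖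
            ≤ (if 2 ≤ |j| then r ^ j.natAbs else 0)
        split_ifs with h
        · exact hbnd j w (le_of_lt hw)
        · simp
    intro z hz
    exact ((hsumdiff z hz).const_mul _)
  -- the uniform bound
  have habs_tsum : ∀ z : ℂ, |z.im| ≤ 1 →
      ‖∑' j : ℤ, if 2 ≤ |j| then c (j • k) * Complex.exp (Complex.I * (j:ℂ) * z) else 0‖
        ≤ 2 * (r^2 * (1-r)⁻¹) := by
    intro z hz
    have hnorm : Summable (fun j : ℤ =>
        ‖(if 2 ≤ |j| then c (j • k) * Complex.exp (Complex.I * (j:ℂ) * z) else 0 : ℂ)‖) := by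
      apply Summable.of_nonneg_of_le (fun j => norm_nonneg _) _ hMs
      intro j
      show ‖(if 2 ≤ |j| then c (j • k) * Complex.exp (Complex.I * (j:ℂ) * z) else 0 : ℂ)‖
          ≤ (if 2 ≤ |j| then r ^ j.natAbs else 0)
      split_ifs with h
      · exact hbnd j z hz
      · simp
    calc ‖∑' j : ℤ, if 2 ≤ |j| then c (j • k) * Complex.exp (Complex.I * (j:ℂ) * z) else 0‖
        ≤ ∑' j : ℤ, ‖(if 2 ≤ |j| then c (j • k) * Complex.exp (Complex.I * (j:ℂ) * z) else 0 : ℂ)‖ :=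
          norm_tsum_le_tsum_norm hnorm
      _ ≤ ∑' j : ℤ, M j := by
          apply Summable.tsum_le_tsum _ hnorm hMs
          intro j
          show ‖(if 2 ≤ |j| then c (j • k) * Complex.exp (Complex.I * (j:ℂ) * z) else 0 : ℂ)‖
              ≤ (if 2 ≤ |j| then r ^ j.natAbs else 0)
          split_ifs with h
          · exact hbnd j z hz
          · simp
      _ = 2 * (r^2 * (1-r)⁻¹) := hM.tsum_eq
  have hCreal : (1 / (2*(A:ℂ))) = (((1/(2*A)) : ℝ) : ℂ) := by push_cast; ring
  have hFb : ∀ z : ℂ, |z.im| < 1 → ‖Fstar c k z‖ ≤ 2 ^ (-(40:ℤ)) := by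
    intro z hz
    have h1 : ‖Fstar c k z‖ = (1/(2*A)) *
        ‖∑' j : ℤ, if 2 ≤ |j| then c (j • k) * Complex.exp (Complex.I * (j:ℂ) * z) else 0‖ := by
      rw [show Fstar c k z = (1 / (2 * (A:ℂ))) *
        ∑' j : ℤ, if 2 ≤ |j| then c (j • k) * Complex.exp (Complex.I * (j:ℂ) * z) else 0 from rfl]
      rw [norm_mul]
      congr 1
      rw [hCreal, Complex.norm_real, Real.norm_eq_abs, abs_of_pos (by positivity)]
    rw [h1]
    have h2 := le_trans (habs_tsum z hz.le) hkey
    have h3 : (1/(2*A)) * ‖∑' j : ℤ, if 2 ≤ |j| then c (j • k) * Complex.exp (Complex.I * (j:ℂ) * z) else 0‖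
        ≤ (1/(2*A)) * (((2:ℝ)^40)⁻¹ * (2*A)) :=
      mul_le_mul_of_nonneg_left h2 (by positivity)
    have h4 : (1/(2*A)) * (((2:ℝ)^40)⁻¹ * (2*A)) = ((2:ℝ)^40)⁻¹ := by field_simp
    have h5 : ((2:ℝ)) ^ (-(40:ℤ)) = ((2:ℝ)^40)⁻¹ := by norm_num
    rw [h5]
    linarith
  -- the projection identity and reality
  have hmain2 : ∀ θ : ℝ, piK c k θ = 2*A*(Real.cos (θ+θk) + (Fstar c k (θ:ℂ)).re)
      ∧ (Fstar c k (θ:ℂ)).im = 0 := by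
    intro θ
    set z : ℂ := (θ:ℂ) with hzdef
    have hzim : |z.im| ≤ 1 := by rw [hzdef]; simp
    have htail := hstail z hzim
    have hlowsum : Summable (fun j : ℤ =>
        if 2 ≤ |j| then (0:ℂ) else c (j • k) * Complex.exp (Complex.I * (j:ℂ) * z)) := by
      apply summable_of_ne_finset_zero (s := ({-1,0,1} : Finset ℤ))
      intro j hj
      simp only [Finset.mem_insert, Finset.mem_singleton] at hj
      rw [if_pos]
      rcases lt_or_ge j 0 with h | h
      · rw [abs_of_neg h]; omega
      · rw [abs_of_nonneg h]; omega
    have hsplit : (∑' j : ℤ, c (j • k) * Complex.exp (Complex.I * (j:ℂ) * z))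
        = (∑' j : ℤ, if 2 ≤ |j| then (0:ℂ) else c (j • k) * Complex.exp (Complex.I * (j:ℂ) * z))
          + (∑' j : ℤ, if 2 ≤ |j| then c (j • k) * Complex.exp (Complex.I * (j:ℂ) * z) else 0) := by
      rw [← Summable.tsum_add hlowsum htail]
      congr 1; funext j; split_ifs <;> simp
    have e1 : ¬ (2 ≤ |(-1:ℤ)|) := by decide
    have e2 : ¬ (2 ≤ |(0:ℤ)|) := by decide
    have e3 : ¬ (2 ≤ |(1:ℤ)|) := by decide
    have hlowval : (∑' j : ℤ, if 2 ≤ |j| then (0:ℂ) else c (j • k) * Complex.exp (Complex.I * (j:ℂ) * z))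
        = c ((-1:ℤ) • k) * Complex.exp (Complex.I * ((-1:ℤ):ℂ) * z)
          + c ((1:ℤ) • k) * Complex.exp (Complex.I * ((1:ℤ):ℂ) * z) := by
      rw [tsum_eq_sum (s := ({-1,0,1} : Finset ℤ)) ?_]
      · rw [Finset.sum_insert (by decide), Finset.sum_insert (by decide), Finset.sum_singleton]
        rw [if_neg e1, if_neg e2, if_neg e3]
        rw [zero_smul, hc0, zero_mul]
        ring
      · intro j hj
        simp only [Finset.mem_insert, Finset.mem_singleton] at hj
        rw [if_pos]
        rcases lt_or_ge j 0 with h | h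
        · rw [abs_of_neg h]; omega
        · rw [abs_of_nonneg h]; omega
    have htailval : (2*(A:ℂ)) * Fstar c k z
        = ∑' j : ℤ, (if 2 ≤ |j| then c (j • k) * Complex.exp (Complex.I * (j:ℂ) * z) else 0) := by
      rw [show Fstar c k z = (1 / (2 * (A:ℂ))) *
        ∑' j : ℤ, (if 2 ≤ |j| then c (j • k) * Complex.exp (Complex.I * (j:ℂ) * z) else 0) from rfl]
      rw [← mul_assoc]
      rw [show (2*(A:ℂ)) * (1 / (2 * (A:ℂ))) = 1 by field_simp]
      rw [one_mul]
    have hconj : ∀ j : ℤ, (starRingEnd ℂ)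
          (if 2 ≤ |j| then c (j • k) * Complex.exp (Complex.I * (j:ℂ) * z) else 0)
        = (if 2 ≤ |(-j)| then c ((-j) • k) * Complex.exp (Complex.I * ((-j:ℤ):ℂ) * z) else 0) := by
      intro j
      by_cases h : 2 ≤ |j|
      · have h' : 2 ≤ |(-j)| := by rwa [abs_neg]
        rw [if_pos h, if_pos h', map_mul]
        congr 1
        · rw [show (-j) • k = -(j • k) by rw [neg_smul], hsym]
        · rw [← Complex.exp_conj]
          congr 1
          rw [hzdef]
          rw [map_mul, map_mul, Complex.conj_I, Complex.conj_ofReal, map_intCast]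
          push_cast
          ring
      · have h' : ¬ 2 ≤ |(-j)| := by rwa [abs_neg]
        rw [if_neg h, if_neg h', map_zero]
    have hTconj : (starRingEnd ℂ)
          (∑' j : ℤ, (if 2 ≤ |j| then c (j • k) * Complex.exp (Complex.I * (j:ℂ) * z) else 0))
        = ∑' j : ℤ, (if 2 ≤ |j| then c (j • k) * Complex.exp (Complex.I * (j:ℂ) * z) else 0) := by
      calc (starRingEnd ℂ) (∑' j : ℤ, (if 2 ≤ |j| then c (j • k) * Complex.exp (Complex.I * (j:ℂ) * z) else 0))
          = ∑' j : ℤ, (starRingEnd ℂ) (if 2 ≤ |j| then c (j • k) * Complex.exp (Complex.I * (j:ℂ) * z) else 0) := by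
            simp only [starRingEnd_apply]
            exact tsum_star
        _ = ∑' j : ℤ, (if 2 ≤ |(-j)| then c ((-j) • k) * Complex.exp (Complex.I * ((-j:ℤ):ℂ) * z) else 0) :=
            tsum_congr hconj
        _ = ∑' j : ℤ, (if 2 ≤ |j| then c (j • k) * Complex.exp (Complex.I * (j:ℂ) * z) else 0) := by
            have := (Equiv.neg ℤ).tsum_eq
              (fun j : ℤ => if 2 ≤ |j| then c (j • k) * Complex.exp (Complex.I * (j:ℂ) * z) else 0)
            simpa [Equiv.neg_apply] using this
    have hTim : (∑' j : ℤ, (if 2 ≤ |j| then c (j • k) * Complex.exp (Complex.I * (j:ℂ) * z) else 0)).im = 0 :=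
      Complex.conj_eq_iff_im.mp hTconj
    have hFim : (Fstar c k z).im = 0 := by
      rw [show Fstar c k z = (1 / (2 * (A:ℂ))) *
        ∑' j : ℤ, (if 2 ≤ |j| then c (j • k) * Complex.exp (Complex.I * (j:ℂ) * z) else 0) from rfl]
      rw [hCreal, Complex.im_ofReal_mul, hTim, mul_zero]
    refine ⟨?_, hFim⟩
    have hpiKdef : piK c k θ = (∑' j : ℤ, c (j • k) * Complex.exp (Complex.I * (j:ℂ) * z)).re := rfl
    rw [hpiKdef, hsplit, hlowval, ← htailval]
    have hterm1 : c ((1:ℤ) • k) * Complex.exp (Complex.I * ((1:ℤ):ℂ) * z)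
        = (A:ℂ) * Complex.exp ((((θ + θk) : ℝ) : ℂ) * Complex.I) := by
      rw [one_smul, hck_eq, mul_assoc, ← Complex.exp_add, hzdef]
      congr 1
      push_cast
      ring
    have htermm1 : c ((-1:ℤ) • k) * Complex.exp (Complex.I * ((-1:ℤ):ℂ) * z)
        = (starRingEnd ℂ) (c ((1:ℤ) • k) * Complex.exp (Complex.I * ((1:ℤ):ℂ) * z)) := by
      rw [map_mul]
      congr 1
      · rw [show ((-1:ℤ)) • k = -((1:ℤ) • k) by rw [neg_smul], hsym]
      · rw [← Complex.exp_conj]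
        congr 1
        rw [hzdef]
        rw [map_mul, map_mul, Complex.conj_I, Complex.conj_ofReal, map_intCast]
        push_cast
        ring
    rw [htermm1]
    have hre1 : (c ((1:ℤ) • k) * Complex.exp (Complex.I * ((1:ℤ):ℂ) * z)).re
        = A * Real.cos (θ + θk) := by
      rw [hterm1, Complex.re_ofReal_mul, Complex.exp_ofReal_mul_I_re]
    rw [Complex.add_re, Complex.add_re, Complex.conj_re, hre1]
    have hre2 : ((2*(A:ℂ)) * Fstar c k z).re = 2 * A * (Fstar c k z).re := by
      rw [show (2*(A:ℂ)) = (((2*A) : ℝ) : ℂ) by push_cast; ring]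
      rw [Complex.re_ofReal_mul]
    rw [hre2]
    ring
  exact ⟨θk, hmem, hexpθk, fun θ => (hmain2 θ).1, fun θ => (hmain2 θ).2, hdiff, hFb⟩
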